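/- arXiv:2011.12500 — 2 statements merged into one kernel-verified Lean document; each statement's English description precedes it below -/
import Mathlib

section
/- If a multigraph G has a vertex v with at least r+1 loops, then every vertex set X with G - X an r-pseudoforest must contain v. Consequently (G, k) is a yes-instance of r-pseudoforest deletion iff (G - v, k-1) is. -/
/-- Adjacency in the sub-multigraph of `(V, E, ends)` with vertex set `S` and
edge set `T`. -/
def mAdjOn {V E : Type*} (ends : E → Sym2 V) (S : Set V) (T : Set E) (u w : V) : Prop :=
  u ∈ S ∧ w ∈ S ∧ ∃ e ∈ T, ends e = s(u, w)

/-- The connected component of `v` in the sub-multigraph `(S, T)`. -/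
def mCompOn {V E : Type*} (ends : E → Sym2 V) (S : Set V) (T : Set E) (v : V) : Set V :=
  {u ∈ S | Relation.ReflTransGen (mAdjOn ends S T) v u}

/-- The edges of the connected component of `v` in the sub-multigraph `(S, T)`. -/
def mCompEdgesOn {V E : Type*} (ends : E → Sym2 V) (S : Set V) (T : Set E) (v : V) : Set E :=
  {e ∈ T | ∀ u ∈ ends e, u ∈ mCompOn ends S T v}

/-- The sub-multigraph `(S, T)` of `(V, E, ends)` is an `r`-pseudoforest:
every connected component `C` satisfies `|E(C)| ≤ |V(C)| + r - 1`,
which for connected multigraphs is equivalent to becoming a forest after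
deleting at most `r` edges. -/
def IsRPFOn {V E : Type*} (ends : E → Sym2 V) (S : Set V) (T : Set E) (r : ℕ) : Prop :=
  ∀ v ∈ S, ((mCompEdgesOn ends S T v).ncard : ℤ) ≤ ((mCompOn ends S T v).ncard : ℤ) + r - 1


/-- Chains of given length from `v` under a relation. -/
def chainN {V : Type*} (A : V → V → Prop) (v : V) : ℕ → V → Prop
  | 0, u => u = v
  | n + 1, u => ∃ w, chainN A v n w ∧ A w u

lemma chainN_of_rtg {V : Type*} {A : V → V → Prop} {v u : V}
    (h : Relation.ReflTransGen A v u) : ∃ n, chainN A v n u := by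
  induction h with
  | refl => exact ⟨0, rfl⟩
  | tail _ hstep ih => obtain ⟨n, hn⟩ := ih; exact ⟨n + 1, _, hn, hstep⟩

lemma rtg_of_chainN {V : Type*} {A : V → V → Prop} {v u : V} {n : ℕ}
    (h : chainN A v n u) : Relation.ReflTransGen A v u := by
  induction n generalizing u with
  | zero => subst h; rfl
  | succ n ih => obtain ⟨w, hw, hstep⟩ := h; exact (ih hw).tail hstep

lemma key_lemma {V E : Type*} [Fintype V] [Fintype E] (ends : E → Sym2 V)
    (r : ℕ) (v : V) (S : Set V) (hv : v ∈ S)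
    (hloops : r + 1 ≤ {e : E | ends e = s(v, v)}.ncard) :
    ¬ ((mCompEdgesOn ends S Set.univ v).ncard : ℤ) ≤
      ((mCompOn ends S Set.univ v).ncard : ℤ) + r - 1 := by
  set A := mAdjOn ends S Set.univ with hA
  set C := mCompOn ends S Set.univ v with hC
  set M := mCompEdgesOn ends S Set.univ v with hM
  set L := {e : E | ends e = s(v, v)} with hL
  have hvC : v ∈ C := ⟨hv, Relation.ReflTransGen.refl⟩
  -- loops are in M
  have hLM : L ⊆ M := by
    intro e he
    refine ⟨Set.mem_univ e, ?_⟩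
    intro u hu
    rw [he] at hu
    simp only [Sym2.mem_iff, or_self] at hu
    subst hu; exact hvC
  -- rank function
  classical
  set d : V → ℕ := fun u => if h : ∃ n, chainN A v n u then Nat.find h else 0 with hd
  -- the property used to pick an edge for each non-v vertex of C
  set Q : V → Prop := fun u => ∃ e, e ∈ M \ L ∧ ∃ w, ends e = s(w, u) ∧ d w < d u with hQ
  have hQall : ∀ u ∈ C \ {v}, Q u := by
    rintro u ⟨⟨huS, hru⟩, hunv⟩
    have hex : ∃ n, chainN A v n u := chainN_of_rtg hru
    have hdu : d u = Nat.find hex := by simp [hd, hex]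
    have hspec : chainN A v (Nat.find hex) u := Nat.find_spec hex
    have hne : Nat.find hex ≠ 0 := by
      intro h0
      rw [h0] at hspec
      exact hunv hspec
    obtain ⟨m, hm⟩ := Nat.exists_eq_succ_of_ne_zero hne
    rw [hm] at hspec
    obtain ⟨w, hw, hwS, huS', e, -, hends⟩ := hspec
    have hexw : ∃ n, chainN A v n w := ⟨m, hw⟩
    have hdw : d w ≤ m := by
      simp only [hd, hexw, dif_pos]
      exact Nat.find_le hw
    have hwC : w ∈ C := ⟨hwS, rtg_of_chainN hw⟩
    have huC : u ∈ C := ⟨huS, hru⟩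
    have heM : e ∈ M := by
      refine ⟨Set.mem_univ e, ?_⟩
      intro x hx
      rw [hends] at hx
      rcases Sym2.mem_iff.mp hx with h | h
      · subst h; exact hwC
      · subst h; exact huC
    have heL : e ∉ L := by
      intro he
      simp only [hL, Set.mem_setOf_eq, hends] at he
      rcases Sym2.eq_iff.mp he with ⟨-, h⟩ | ⟨-, h⟩ <;> exact hunv h
    refine ⟨e, ⟨heM, heL⟩, w, hends, ?_⟩
    rw [hdu, hm]
    omega
  -- L nonempty hence E nonempty for junk values
  have hLne : L.Nonempty := by
    rw [← Set.ncard_pos L.toFinite]; omega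
  obtain ⟨e₀, -⟩ := hLne
  set f : V → E := fun u => if h : Q u then h.choose else e₀ with hf
  have hcard1 : (C \ {v}).ncard ≤ (M \ L).ncard := by
    apply Set.ncard_le_ncard_of_injOn f
    · intro u hu
      have h := hQall u hu
      simp only [hf, dif_pos h]
      exact h.choose_spec.1
    · intro u₁ hu₁ u₂ hu₂ heq
      have h₁ := hQall u₁ hu₁
      have h₂ := hQall u₂ hu₂
      simp only [hf, dif_pos h₁, dif_pos h₂] at heq
      obtain ⟨-, w₁, hends₁, hd₁⟩ := h₁.choose_spec
      obtain ⟨-, w₂, hends₂, hd₂⟩ := h₂.choose_spec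
      rw [heq, hends₂] at hends₁
      rcases Sym2.eq_iff.mp hends₁.symm with ⟨hw, hu⟩ | ⟨hw, hu⟩
      · exact hu
      · subst hw; subst hu; omega
  have h2 : (M \ L).ncard + L.ncard = M.ncard := Set.ncard_diff_add_ncard_of_subset hLM M.toFinite
  have h3 : (C \ {v}).ncard = C.ncard - 1 := Set.ncard_diff_singleton_of_mem hvC
  have h4 : 0 < C.ncard := (Set.ncard_pos C.toFinite).mpr ⟨v, hvC⟩
  omega
/-- If a vertex `v` carries at least `r+1` loops, then every `r`-pseudoforest
deletion set must contain `v`; consequently `(G, k)` is a yes-instance of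
`r`-pseudoforest deletion iff `(G - v, k - 1)` is. -/
theorem loop_vertex_forced
    {V E : Type*} [Fintype V] [Fintype E] (ends : E → Sym2 V)
    (r k : ℕ) (hk : 1 ≤ k) (v : V)
    (hloops : r + 1 ≤ {e : E | ends e = s(v, v)}.ncard) :
    (∀ X : Set V, IsRPFOn ends Xᶜ Set.univ r → v ∈ X) ∧
    ((∃ X : Set V, X.ncard ≤ k ∧ IsRPFOn ends Xᶜ Set.univ r) ↔
      (∃ X : Set V, v ∉ X ∧ X.ncard ≤ k - 1 ∧ IsRPFOn ends ({v} ∪ X)ᶜ Set.univ r)) := by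
  classical
  have part1 : ∀ X : Set V, IsRPFOn ends Xᶜ Set.univ r → v ∈ X := by
    intro X hX
    by_contra hv
    exact key_lemma ends r v Xᶜ hv hloops (hX v hv)
  refine ⟨part1, ?_, ?_⟩
  · rintro ⟨X, hXk, hX⟩
    have hvX : v ∈ X := part1 X hX
    refine ⟨X \ {v}, by simp, ?_, ?_⟩
    · have : (X \ {v}).ncard = X.ncard - 1 := Set.ncard_diff_singleton_of_mem hvX
      omega
    · have : {v} ∪ (X \ {v}) = X := Set.union_diff_cancel (by simpa using hvX)
      rw [this]
      exact hX
  · rintro ⟨X, hvX, hXk, hX⟩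
    refine ⟨{v} ∪ X, ?_, hX⟩
    have h1 : ({v} ∪ X : Set V).ncard ≤ ({v} : Set V).ncard + X.ncard :=
      Set.ncard_union_le _ _
    have h2 : ({v} : Set V).ncard = 1 := Set.ncard_singleton v
    omega
end

section
/- Reduction Rule 4 is safe: if v is a vertex of degree at most 1 in G, then for any k, G has a set X ⊆ V(G) \ {v} with |X| ≤ k and G - X an r-pseudoforest if and only if G - v has a set X of size at most k making (G - v) - X an r-pseudoforest; moreover (G,k) is a yes-instance iff (G - v, k) is. -/
/-- A simple graph is an `r`-pseudoforest if one can delete a set of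
edges, at most `r` from each connected component, so that the result is a forest. -/
def IsRPseudoforest {V : Type*} (H : SimpleGraph V) (r : ℕ) : Prop :=
  ∃ D ⊆ H.edgeSet, (H.deleteEdges D).IsAcyclic ∧
    ∀ c : H.ConnectedComponent,
      {e ∈ D | ∃ v ∈ e, H.connectedComponentMk v = c}.ncard ≤ r

namespace RR4

open SimpleGraph

variable {V : Type*} {K : SimpleGraph V} {S : Set V} {u : V}

/-- Descend a walk whose support lies in `S` to the induced subgraph on `S`. -/
def toInduce : ∀ {a b : V} (p : K.Walk a b), (∀ x ∈ p.support, x ∈ S) →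
    (ha : a ∈ S) → (hb : b ∈ S) → (K.induce S).Walk ⟨a, ha⟩ ⟨b, hb⟩
  | _, _, SimpleGraph.Walk.nil, _, _, _ => SimpleGraph.Walk.nil
  | _, _, SimpleGraph.Walk.cons (v := c) h q, hp, ha, hb =>
      SimpleGraph.Walk.cons (by simpa using h)
        (toInduce q (fun x hx => hp x (by simp [hx])) (hp c (by simp)) hb)

lemma toInduce_map : ∀ {a b : V} (p : K.Walk a b) (hp : ∀ x ∈ p.support, x ∈ S)
    (ha : a ∈ S) (hb : b ∈ S),
    (toInduce p hp ha hb).map (SimpleGraph.Embedding.induce S).toHom = p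
  | _, _, SimpleGraph.Walk.nil, _, _, _ => rfl
  | _, _, SimpleGraph.Walk.cons h q, hp, ha, hb => by
      rw [toInduce, SimpleGraph.Walk.map_cons, toInduce_map]
      rfl

lemma not_mem_support_of_isPath (hu : ∀ a b, K.Adj u a → K.Adj u b → a = b) :
    ∀ {a b : V} (p : K.Walk a b), p.IsPath → a ≠ u → b ≠ u → u ∉ p.support := by
  intro a b p
  induction p with
  | nil =>
      intro _ ha _
      simp only [SimpleGraph.Walk.support_nil, List.mem_singleton]
      exact fun h => ha h.symm
  | @cons x y z h q ih =>
      intro hp hx hz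
      rw [SimpleGraph.Walk.cons_isPath_iff] at hp
      by_cases hy : y = u
      · subst hy
        obtain ⟨d, h', q', rfl⟩ := SimpleGraph.Walk.exists_eq_cons_of_ne (Ne.symm hz) q
        have had : x = d := hu x d h.symm h'
        apply absurd _ hp.2
        rw [had, SimpleGraph.Walk.support_cons]
        exact List.mem_cons_of_mem _ q'.start_mem_support
      · have hih := ih hp.1 hy hz
        rw [SimpleGraph.Walk.support_cons, List.mem_cons]
        exact fun hm => hm.elim (fun h1 => hx h1.symm) hih

lemma not_mem_support_of_isCycle [DecidableEq V] (hu : ∀ a b, K.Adj u a → K.Adj u b → a = b)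
    {a : V} {p : K.Walk a a} (hp : p.IsCycle) : u ∉ p.support := by
  intro hmem
  have hq : (p.rotate u hmem).IsCycle := hp.rotate hmem
  have hlen : 3 ≤ (p.rotate u hmem).length := hq.three_le_length
  generalize hrot : p.rotate u hmem = q at hq hlen
  cases q with
  | nil => simp at hlen
  | @cons _ c _ h q' =>
    have hq' : q'.IsPath := ((SimpleGraph.Walk.cons_isCycle_iff q' h).mp hq).1
    have hcu : c ≠ u := h.ne'
    obtain ⟨d, h', q'', hrev⟩ := SimpleGraph.Walk.exists_eq_cons_of_ne (Ne.symm hcu) q'.reverse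
    have hcd : c = d := hu c d h h'
    subst hcd
    have hq'' : q''.IsPath ∧ u ∉ q''.support :=
      (SimpleGraph.Walk.cons_isPath_iff h' q'').mp (hrev ▸ hq'.reverse)
    have : q'' = SimpleGraph.Walk.nil := (SimpleGraph.Walk.isPath_iff_eq_nil (p := q'')).mp hq''.1
    subst this
    have : q'.reverse.length = 1 := by rw [hrev]; simp
    rw [SimpleGraph.Walk.length_reverse] at this
    simp [SimpleGraph.Walk.length_cons, this] at hlen

lemma reachable_induce [DecidableEq V] (hu : ∀ a b, K.Adj u a → K.Adj u b → a = b)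
    (a b : ↥({u}ᶜ : Set V)) (h : K.Reachable a.val b.val) :
    (K.induce ({u}ᶜ : Set V)).Reachable a b := by
  obtain ⟨p⟩ := h
  have hpath : (p.toPath : K.Walk a.val b.val).IsPath := p.toPath.2
  have ha : a.val ≠ u := Set.mem_compl_singleton_iff.mp a.2
  have hb : b.val ≠ u := Set.mem_compl_singleton_iff.mp b.2
  have hnm := not_mem_support_of_isPath hu _ hpath ha hb
  have hS : ∀ x ∈ (p.toPath : K.Walk a.val b.val).support, x ∈ ({u}ᶜ : Set V) := by
    intro x hx
    simp only [Set.mem_compl_iff, Set.mem_singleton_iff]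
    rintro rfl
    exact hnm hx
  exact ⟨toInduce _ hS a.2 b.2⟩

lemma isAcyclic_of_induce [DecidableEq V] (hu : ∀ a b, K.Adj u a → K.Adj u b → a = b)
    (h : (K.induce ({u}ᶜ : Set V)).IsAcyclic) : K.IsAcyclic := by
  intro a p hp
  have hnm := not_mem_support_of_isCycle hu hp
  have ha : a ∈ ({u}ᶜ : Set V) := fun h' => hnm (h' ▸ p.start_mem_support)
  have hS : ∀ x ∈ p.support, x ∈ ({u}ᶜ : Set V) := by
    intro x hx
    simp only [Set.mem_compl_iff, Set.mem_singleton_iff]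
    rintro rfl
    exact hnm hx
  refine h (toInduce p hS ha ha) ?_
  rw [← SimpleGraph.Walk.map_isCycle_iff_of_injective
    (f := (SimpleGraph.Embedding.induce ({u}ᶜ : Set V)).toHom) (Subtype.val_injective),
    toInduce_map]
  exact hp

lemma pseudo_of_embedding {W W' : Type*} [Finite W'] {K : SimpleGraph W} {K' : SimpleGraph W'}
    (f : K ↪g K') {r : ℕ} (h : IsRPseudoforest K' r) : IsRPseudoforest K r := by
  classical
  obtain ⟨D', hD'sub, hacyc, hcount⟩ := h
  refine ⟨{e ∈ K.edgeSet | e.map f ∈ D'}, fun e he => he.1, ?_, ?_⟩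
  · let g : K.deleteEdges {e ∈ K.edgeSet | e.map f ∈ D'} ↪g K'.deleteEdges D' :=
      { toFun := f
        inj' := f.injective
        map_rel_iff' := by
          intro a b
          simp only [SimpleGraph.deleteEdges_adj, Set.mem_setOf_eq, Function.Embedding.coeFn_mk]
          constructor
          · rintro ⟨hadj, hne⟩
            have hK : K.Adj a b := f.map_rel_iff.mp hadj
            exact ⟨hK, fun hD => hne (by rw [← Sym2.map_pair_eq]; exact hD.2)⟩
          · rintro ⟨hadj, hne⟩
            exact ⟨f.map_rel_iff.mpr hadj, fun h' => hne ⟨hadj, by rwa [Sym2.map_pair_eq]⟩⟩ }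
    intro a p hp
    exact hacyc (p.map g.toHom)
      ((SimpleGraph.Walk.map_isCycle_iff_of_injective f.injective).mpr hp)
  · intro c
    have hinj : Function.Injective (Sym2.map f) := Sym2.map.injective f.injective
    have hsub : Sym2.map f '' {e ∈ {e ∈ K.edgeSet | e.map f ∈ D'} |
        ∃ w ∈ e, K.connectedComponentMk w = c} ⊆
        {e ∈ D' | ∃ w ∈ e, K'.connectedComponentMk w = c.map f.toHom} := by
      rintro _ ⟨e, ⟨heD, w, hwe, hwc⟩, rfl⟩
      refine ⟨heD.2, f w, Sym2.mem_map.mpr ⟨w, hwe, rfl⟩, ?_⟩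
      rw [← hwc, SimpleGraph.ConnectedComponent.map_mk]
      rfl
    calc {e ∈ {e ∈ K.edgeSet | e.map f ∈ D'} | ∃ w ∈ e, K.connectedComponentMk w = c}.ncard
        = (Sym2.map f '' {e ∈ {e ∈ K.edgeSet | e.map f ∈ D'} |
            ∃ w ∈ e, K.connectedComponentMk w = c}).ncard :=
          (Set.ncard_image_of_injective _ hinj).symm
      _ ≤ {e ∈ D' | ∃ w ∈ e, K'.connectedComponentMk w = c.map f.toHom}.ncard :=
          Set.ncard_le_ncard hsub (Set.toFinite _)
      _ ≤ r := hcount _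

lemma pseudo_insert {W : Type*} [Finite W] [DecidableEq W] {K : SimpleGraph W} {u : W}
    (hu : ∀ a b, K.Adj u a → K.Adj u b → a = b) {r : ℕ}
    (h : IsRPseudoforest (K.induce ({u}ᶜ : Set W)) r) : IsRPseudoforest K r := by
  obtain ⟨D, hDsub, hacyc, hcount⟩ := h
  set m : Sym2 ↥({u}ᶜ : Set W) → Sym2 W := Sym2.map Subtype.val with hm
  have hminj : Function.Injective m := Sym2.map.injective Subtype.val_injective
  have key : ∀ a b : ↥({u}ᶜ : Set W), s(a.val, b.val) ∈ m '' D ↔ s(a, b) ∈ D := by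
    intro a b
    constructor
    · rintro ⟨e, heD, hme⟩
      have : e = s(a, b) := hminj (by rw [hme, hm, Sym2.map_pair_eq])
      rwa [this] at heD
    · intro hD
      exact ⟨_, hD, by rw [hm, Sym2.map_pair_eq]⟩
  refine ⟨m '' D, ?_, ?_, ?_⟩
  · rintro _ ⟨e, heD, rfl⟩
    have he := hDsub heD
    induction e using Sym2.ind with
    | _ x y =>
      simp only [hm, Sym2.map_pair_eq, SimpleGraph.mem_edgeSet, SimpleGraph.comap_adj] at he ⊢
      exact he
  · have hu2 : ∀ a b, (K.deleteEdges (m '' D)).Adj u a → (K.deleteEdges (m '' D)).Adj u b →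
        a = b := fun a b h1 h2 =>
      hu a b (SimpleGraph.deleteEdges_adj.mp h1).1 (SimpleGraph.deleteEdges_adj.mp h2).1
    apply isAcyclic_of_induce hu2
    have hEq : (K.deleteEdges (m '' D)).induce ({u}ᶜ : Set W) =
        (K.induce ({u}ᶜ : Set W)).deleteEdges D := by
      ext a b
      simp only [SimpleGraph.comap_adj, SimpleGraph.deleteEdges_adj, Function.Embedding.coe_subtype]
      rw [key a b]
    rw [hEq]
    exact hacyc
  · intro c
    rcases Set.eq_empty_or_nonempty
      {e ∈ m '' D | ∃ w ∈ e, K.connectedComponentMk w = c} with hE | ⟨e₀, he₀⟩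
    · rw [hE]; simp
    · obtain ⟨he₀D, w₀, hw₀e, hw₀c⟩ := he₀
      obtain ⟨e₀', he₀'D, rfl⟩ := he₀D
      obtain ⟨w₀', hw₀'e, rfl⟩ := Sym2.mem_map.mp hw₀e
      set c' := (K.induce ({u}ᶜ : Set W)).connectedComponentMk w₀' with hc'
      have hsub2 : {e ∈ m '' D | ∃ w ∈ e, K.connectedComponentMk w = c} ⊆
          m '' {e ∈ D | ∃ w ∈ e, (K.induce ({u}ᶜ : Set W)).connectedComponentMk w = c'} := by
        rintro e' ⟨⟨e, heD, rfl⟩, w, hwe, hwc⟩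
        obtain ⟨w', hw'e, rfl⟩ := Sym2.mem_map.mp hwe
        refine ⟨e, ⟨heD, w', hw'e, ?_⟩, rfl⟩
        exact SimpleGraph.ConnectedComponent.eq.mpr
          (reachable_induce hu w' w₀' (SimpleGraph.ConnectedComponent.eq.mp (hwc.trans hw₀c.symm)))
      calc {e ∈ m '' D | ∃ w ∈ e, K.connectedComponentMk w = c}.ncard
          ≤ (m '' {e ∈ D | ∃ w ∈ e,
              (K.induce ({u}ᶜ : Set W)).connectedComponentMk w = c'}).ncard :=
            Set.ncard_le_ncard hsub2 (Set.toFinite _)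
        _ = {e ∈ D | ∃ w ∈ e, (K.induce ({u}ᶜ : Set W)).connectedComponentMk w = c'}.ncard :=
            Set.ncard_image_of_injective _ hminj
        _ ≤ r := hcount _

end RR4

/-- Reduction Rule 4 is safe: if `v` has degree at most 1 in `G`, then `G` has a
solution avoiding `v` of size at most `k` iff `G - v` has a solution of size at
most `k`; moreover `(G, k)` is a yes-instance iff `(G - v, k)` is. -/
theorem reduction_rule_4_safe
    {V : Type*} [Fintype V] [DecidableEq V] (G : SimpleGraph V)
    [DecidableRel G.Adj] (r k : ℕ) (v : V) (hv : G.degree v ≤ 1) :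
    ((∃ X : Set V, v ∉ X ∧ X.ncard ≤ k ∧ IsRPseudoforest (G.induce Xᶜ) r) ↔
      (∃ X : Set V, v ∉ X ∧ X.ncard ≤ k ∧ IsRPseudoforest (G.induce (insert v X)ᶜ) r)) ∧
    ((∃ X : Set V, X.ncard ≤ k ∧ IsRPseudoforest (G.induce Xᶜ) r) ↔
      (∃ X : Set V, v ∉ X ∧ X.ncard ≤ k ∧ IsRPseudoforest (G.induce (insert v X)ᶜ) r)) := by
  classical
  have huniq : ∀ a b : V, G.Adj v a → G.Adj v b → a = b := by
    intro a b h1 h2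
    by_contra hne
    have hsub : ({a, b} : Finset V) ⊆ G.neighborFinset v := by
      intro x hx
      rcases Finset.mem_insert.mp hx with rfl | hx
      · exact (SimpleGraph.mem_neighborFinset G v x).mpr h1
      · rw [Finset.mem_singleton] at hx
        subst hx
        exact (SimpleGraph.mem_neighborFinset G v x).mpr h2
    have hcard := Finset.card_le_card hsub
    rw [Finset.card_pair hne] at hcard
    have : 2 ≤ G.degree v := hcard
    omega
  have iff1 : (∃ X : Set V, v ∉ X ∧ X.ncard ≤ k ∧ IsRPseudoforest (G.induce Xᶜ) r) ↔
      (∃ X : Set V, v ∉ X ∧ X.ncard ≤ k ∧ IsRPseudoforest (G.induce (insert v X)ᶜ) r) := by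
    constructor
    · rintro ⟨X, hvX, hk, hA⟩
      have hle : ((insert v X)ᶜ : Set V) ⊆ Xᶜ :=
        Set.compl_subset_compl.mpr (Set.subset_insert v X)
      exact ⟨X, hvX, hk, RR4.pseudo_of_embedding (G.induceHomOfLE hle) hA⟩
    · rintro ⟨X, hvX, hk, hB⟩
      refine ⟨X, hvX, hk, ?_⟩
      have hvc : v ∈ (Xᶜ : Set V) := hvX
      set u : ↥(Xᶜ : Set V) := ⟨v, hvc⟩ with hudef
      have hu : ∀ a b : ↥(Xᶜ : Set V),
          (G.induce Xᶜ).Adj u a → (G.induce Xᶜ).Adj u b → a = b := by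
        intro a b h1 h2
        exact Subtype.ext (huniq a.val b.val h1 h2)
      apply RR4.pseudo_insert hu
      refine RR4.pseudo_of_embedding ?_ hB
      refine ⟨⟨fun w => ⟨w.val.val, ?_⟩, ?_⟩, ?_⟩
      · intro hmem
        rcases Set.mem_insert_iff.mp hmem with h1 | h1
        · exact w.2 (Set.mem_singleton_iff.mpr (Subtype.ext h1))
        · exact w.val.2 h1
      · intro a b hab
        simp only [Subtype.mk.injEq] at hab
        exact Subtype.ext (Subtype.ext hab)
      · intro a b
        exact Iff.rfl
  refine ⟨iff1, ?_, ?_⟩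
  · rintro ⟨X, hk, hA⟩
    by_cases hvX : v ∈ X
    · refine ⟨X \ {v}, fun h => h.2 rfl, ?_, ?_⟩
      · exact le_trans (Set.ncard_le_ncard Set.diff_subset (Set.toFinite _)) hk
      · have hins : insert v (X \ {v}) = X := by
          rw [Set.insert_diff_singleton, Set.insert_eq_self.mpr hvX]
        rw [hins]
        exact hA
    · exact iff1.mp ⟨X, hvX, hk, hA⟩
  · rintro ⟨X, hvX, hk, hB⟩
    obtain ⟨X', _, hk', hA'⟩ := iff1.mpr ⟨X, hvX, hk, hB⟩
    exact ⟨X', hk', hA'⟩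
end
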